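/- Let s_1, ..., s_n be positive real numbers and let M, N, m, n', k > 0 satisfy k·m < 1 and k·n' > 1. Then ((1/n)Σ s_i)·[M·((1/n)Σ s_i)^m + N·((1/n)Σ s_i)^{n'}]^k ≤ (1/n)·Σ_{i=1}^n s_i·(M·s_i^m + N·s_i^{n'})^k. -/

import Mathlib

open Set Finset Real

/-- Convexity of `x ↦ (M x^p + N x^q)^k` on `(0,∞)` under suitable conditions. -/
lemma convex_aux (M N p q k : ℝ) (hM : 0 < M) (hN : 0 < N) (hp : 0 < p) (hq : 0 < q)
    (hk : 0 < k) (hpk : 1 ≤ k * p) (hqk : 1 ≤ k * q)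
    (hcross : 0 ≤ 2*k*p*q + (p-q)^2 - p - q) :
    ConvexOn ℝ (Set.Ioi (0:ℝ)) (fun x => (M * x ^ p + N * x ^ q) ^ k) := by
  set f : ℝ → ℝ := fun x => (M * x ^ p + N * x ^ q) ^ k with hf
  set g : ℝ → ℝ := fun x =>
    (M * (p * x ^ (p-1)) + N * (q * x ^ (q-1))) * k * (M * x ^ p + N * x ^ q) ^ (k-1) with hg
  have hu : ∀ x ∈ Ioi (0:ℝ), 0 < M * x ^ p + N * x ^ q := by
    intro x hx
    have hx' : (0:ℝ) < x := hx
    positivity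
  have hdu : ∀ x ∈ Ioi (0:ℝ), HasDerivAt (fun y => M * y ^ p + N * y ^ q)
      (M * (p * x ^ (p-1)) + N * (q * x ^ (q-1))) x := by
    intro x hx
    have hx' : (0:ℝ) < x := hx
    exact ((Real.hasDerivAt_rpow_const (p := p) (Or.inl hx'.ne')).const_mul M).add
      ((Real.hasDerivAt_rpow_const (p := q) (Or.inl hx'.ne')).const_mul N)
  have hdf : ∀ x ∈ Ioi (0:ℝ), HasDerivAt f (g x) x := by
    intro x hx
    exact (hdu x hx).rpow_const (Or.inl (hu x hx).ne')
  have hderiv : ∀ x ∈ Ioi (0:ℝ), deriv f x = g x := fun x hx => (hdf x hx).deriv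
  have hdg : ∀ x ∈ Ioi (0:ℝ), HasDerivAt g
      ((M * (p * ((p-1) * x ^ (p-2))) + N * (q * ((q-1) * x ^ (q-2)))) * k
          * (M * x ^ p + N * x ^ q) ^ (k-1)
        + (M * (p * x ^ (p-1)) + N * (q * x ^ (q-1))) * k
          * ((M * (p * x ^ (p-1)) + N * (q * x ^ (q-1))) * (k-1)
              * (M * x ^ p + N * x ^ q) ^ (k-1-1))) x := by
    intro x hx
    have hx' : (0:ℝ) < x := hx
    have h1 : HasDerivAt (fun y => (M * (p * y ^ (p-1)) + N * (q * y ^ (q-1))) * k)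
        ((M * (p * ((p-1) * x ^ (p-2))) + N * (q * ((q-1) * x ^ (q-2)))) * k) x := by
      have ha := ((Real.hasDerivAt_rpow_const (p := p-1) (Or.inl hx'.ne')).const_mul p).const_mul M
      have hb := ((Real.hasDerivAt_rpow_const (p := q-1) (Or.inl hx'.ne')).const_mul q).const_mul N
      have := (ha.add hb).mul_const k
      exact this.congr_deriv (by ring_nf)
    have h2 : HasDerivAt (fun y => (M * y ^ p + N * y ^ q) ^ (k-1))
        ((M * (p * x ^ (p-1)) + N * (q * x ^ (q-1))) * (k-1)
          * (M * x ^ p + N * x ^ q) ^ (k-1-1)) x :=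
      (hdu x hx).rpow_const (Or.inl (hu x hx).ne')
    exact h1.mul h2
  have hmemnhds : ∀ x ∈ Ioi (0:ℝ), deriv f =ᶠ[nhds x] g :=
    fun x hx => Filter.eventuallyEq_of_mem (isOpen_Ioi.mem_nhds hx) hderiv
  apply convexOn_of_deriv2_nonneg (convex_Ioi 0)
  · exact fun x hx => ((hdf x hx).differentiableAt.continuousAt).continuousWithinAt
  · rw [interior_Ioi]
    exact fun x hx => ((hdf x hx).differentiableAt).differentiableWithinAt
  · rw [interior_Ioi]
    intro x hx
    have : DifferentiableAt ℝ g x := (hdg x hx).differentiableAt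
    exact ((this.congr_of_eventuallyEq (hmemnhds x hx)).differentiableWithinAt)
  · rw [interior_Ioi]
    intro x hx
    have hx' : (0:ℝ) < x := hx
    have h2 : deriv^[2] f x = deriv (deriv f) x := rfl
    rw [h2, (hmemnhds x hx).deriv_eq, (hdg x hx).deriv]
    -- now prove nonnegativity of the explicit second derivative
    set A := x ^ p with hA
    set B := x ^ q with hB
    have hApos : 0 < A := Real.rpow_pos_of_pos hx' p
    have hBpos : 0 < B := Real.rpow_pos_of_pos hx' q
    have hUpos : 0 < M * A + N * B := by positivity
    have e1 : x ^ (p-1) = A / x := by rw [hA, Real.rpow_sub hx', Real.rpow_one]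
    have e2 : x ^ (q-1) = B / x := by rw [hB, Real.rpow_sub hx', Real.rpow_one]
    have e3 : x ^ (p-2) = A / (x*x) := by
      rw [hA, Real.rpow_sub hx', show (2:ℝ) = ((2:ℕ):ℝ) by norm_num, Real.rpow_natCast]
      ring_nf
    have e4 : x ^ (q-2) = B / (x*x) := by
      rw [hB, Real.rpow_sub hx', show (2:ℝ) = ((2:ℕ):ℝ) by norm_num, Real.rpow_natCast]
      ring_nf
    have e5 : (M * A + N * B) ^ (k-1) = (M * A + N * B) ^ (k-2) * (M * A + N * B) := by
      rw [show (k-1) = (k-2)+1 by ring, Real.rpow_add_one hUpos.ne']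
    have e6 : (k-1-1 : ℝ) = k - 2 := by ring
    rw [e1, e2, e3, e4, e6, e5]
    have hE : 0 ≤ (M*A + N*B) * (M*A*p*(p-1) + N*B*q*(q-1)) + (k-1) * (M*A*p + N*B*q)^2 := by
      have hid : (M*A + N*B) * (M*A*p*(p-1) + N*B*q*(q-1)) + (k-1) * (M*A*p + N*B*q)^2
          = (M*A)^2 * (p*(k*p-1)) + (N*B)^2 * (q*(k*q-1))
            + (M*A)*(N*B) * (2*k*p*q + (p-q)^2 - p - q) := by ring
      rw [hid]
      have t1 : 0 ≤ (M*A)^2 * (p*(k*p-1)) := by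
        have : 0 ≤ k*p - 1 := by linarith
        positivity
      have t2 : 0 ≤ (N*B)^2 * (q*(k*q-1)) := by
        have : 0 ≤ k*q - 1 := by linarith
        positivity
      have t3 : 0 ≤ (M*A)*(N*B) * (2*k*p*q + (p-q)^2 - p - q) := by positivity
      linarith
    have hUk : 0 ≤ (M * A + N * B) ^ (k-2) := (Real.rpow_pos_of_pos hUpos _).le
    have hx2 : (0:ℝ) < x * x := by positivity
    have hfinal : (M * (p * ((p-1) * (A / (x*x)))) + N * (q * ((q-1) * (B / (x*x))))) * k
          * ((M * A + N * B) ^ (k-2) * (M * A + N * B))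
        + (M * (p * (A / x)) + N * (q * (B / x))) * k
          * ((M * (p * (A / x)) + N * (q * (B / x))) * (k-1) * (M * A + N * B) ^ (k-2))
        = k * (M * A + N * B) ^ (k-2)
          * ((M*A + N*B) * (M*A*p*(p-1) + N*B*q*(q-1)) + (k-1) * (M*A*p + N*B*q)^2) / (x*x) := by
      field_simp
    rw [hfinal]
    apply div_nonneg _ hx2.le
    have := mul_nonneg (mul_nonneg hk.le hUk) hE
    linarith

/-- Jensen-type inequality (Lemma 6 of the paper). -/
theorem jensen_type_inequality (n : ℕ) (hn : 0 < n) (s : Fin n → ℝ) (hs : ∀ i, 0 < s i)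
    (M N m n' k : ℝ) (hM : 0 < M) (hN : 0 < N) (hm : 0 < m) (hn' : 0 < n') (hk : 0 < k)
    (hkm : k * m < 1) (hkn : 1 < k * n') :
    ((1 / (n : ℝ)) * ∑ i, s i) *
        (M * ((1 / (n : ℝ)) * ∑ i, s i) ^ m + N * ((1 / (n : ℝ)) * ∑ i, s i) ^ n') ^ k
      ≤ (1 / (n : ℝ)) * ∑ i, s i * (M * s i ^ m + N * s i ^ n') ^ k := by
  have hk0 : (k:ℝ) ≠ 0 := hk.ne'
  set p : ℝ := m + 1/k with hpdef
  set q : ℝ := n' + 1/k with hqdef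
  have hp : 0 < p := by positivity
  have hq : 0 < q := by positivity
  have hpk : 1 ≤ k * p := by
    have : k * p = k * m + 1 := by rw [hpdef, mul_add, mul_one_div_cancel hk0]
    nlinarith [mul_pos hk hm]
  have hqk : 1 ≤ k * q := by
    have : k * q = k * n' + 1 := by rw [hqdef, mul_add, mul_one_div_cancel hk0]
    nlinarith [mul_pos hk hn']
  have hcross : 0 ≤ 2*k*p*q + (p-q)^2 - p - q := by
    have hid : 2*k*p*q + (p-q)^2 - p - q = 2*k*m*n' + m + n' + (m-n')^2 := by
      rw [hpdef, hqdef]; field_simp; ring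
    rw [hid]
    positivity
  have hconv := convex_aux M N p q k hM hN hp hq hk hpk hqk hcross
  -- the key pointwise identity
  have hfx : ∀ x : ℝ, 0 < x →
      (M * x ^ p + N * x ^ q) ^ k = x * (M * x ^ m + N * x ^ n') ^ k := by
    intro x hx
    have h1 : x ^ p = x ^ (1/k) * x ^ m := by
      rw [← Real.rpow_add hx, hpdef]; ring_nf
    have h2 : x ^ q = x ^ (1/k) * x ^ n' := by
      rw [← Real.rpow_add hx, hqdef]; ring_nf
    have h3 : M * x ^ p + N * x ^ q = x ^ (1/k) * (M * x ^ m + N * x ^ n') := by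
      rw [h1, h2]; ring
    rw [h3, Real.mul_rpow (Real.rpow_pos_of_pos hx _).le (by positivity),
      ← Real.rpow_mul hx.le, one_div, inv_mul_cancel₀ hk0, Real.rpow_one]
  -- Jensen
  have hw : ∑ _i : Fin n, (1/(n:ℝ)) = 1 := by
    rw [Finset.sum_const, Finset.card_univ, Fintype.card_fin, nsmul_eq_mul]
    field_simp
  have hJ := hconv.map_sum_le (t := Finset.univ) (w := fun _ => 1/(n:ℝ)) (p := s)
    (fun i _ => by positivity) hw (fun i _ => hs i)
  have hsum : ∑ i, (1/(n:ℝ)) • s i = (1/(n:ℝ)) * ∑ i, s i := by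
    simp [smul_eq_mul, Finset.mul_sum]
  have hmean : 0 < (1/(n:ℝ)) * ∑ i, s i := by
    apply mul_pos (by positivity)
    exact Finset.sum_pos (fun i _ => hs i) (by simp [Finset.univ_nonempty_iff, Fin.pos_iff_nonempty.mp hn])
  rw [hsum] at hJ
  rw [← hfx _ hmean]
  refine hJ.trans_eq ?_
  rw [Finset.mul_sum]
  apply Finset.sum_congr rfl
  intro i _
  rw [smul_eq_mul, hfx _ (hs i)]
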